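/- Let L be a collection of subspaces of Euclidean space E^n (n ≥ 2) generated by hyperplanes, and suppose there exist hyperplanes L_1, ..., L_n ∈ L whose normal vectors form a basis of R^n (equivalently, L_1 ∩ ... ∩ L_n is a single point). Let U ∈ L be any hyperplane with normal vector w. Then there exists an index i such that the n-1 hyperplanes {L_j ∩ U : j ≠ i} inside U have a single common point; i.e., ∩_{j≠i} L_j ∩ U is a point. -/

import Mathlib

set_option maxHeartbeats 800000


open scoped RealInnerProductSpace

/-- If `L_1, …, L_n` are affine hyperplanes of `Eⁿ` whose normal vectors form a basis, and `U`
is another hyperplane, then for some `i` the hyperplanes `{L_j ∩ U : j ≠ i}` of `U` intersect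
in a single point. -/
theorem stmt_13 (n : ℕ) (hn : 2 ≤ n)
    (v : Fin n → EuclideanSpace ℝ (Fin n)) (a : Fin n → ℝ)
    (hv : ∃ b : Module.Basis (Fin n) ℝ (EuclideanSpace ℝ (Fin n)), ⇑b = v)
    (w : EuclideanSpace ℝ (Fin n)) (hw : w ≠ 0) (b₀ : ℝ) :
    ∃ (i : Fin n) (p : EuclideanSpace ℝ (Fin n)),
      {x : EuclideanSpace ℝ (Fin n) | ⟪x, w⟫ = b₀ ∧ ∀ j, j ≠ i → ⟪x, v j⟫ = a j} = {p} := by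
  obtain ⟨b, hb⟩ := hv
  have hw' : b.repr w ≠ 0 := fun h => hw (b.repr.map_eq_zero_iff.mp h)
  obtain ⟨i, hi⟩ : ∃ i, b.repr w i ≠ 0 := by
    by_contra h; push_neg at h; exact hw' (Finsupp.ext h)
  set u : Fin n → EuclideanSpace ℝ (Fin n) := fun j => if j = i then w else v j with hu
  have hspan : Submodule.span ℝ (Set.range u) = ⊤ := by
    rw [eq_top_iff, ← b.span_eq, Submodule.span_le]
    rintro x ⟨k, rfl⟩
    rw [hb]
    have hwmem : w ∈ Submodule.span ℝ (Set.range u) :=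
      Submodule.subset_span ⟨i, by simp [hu]⟩
    have hmemj : ∀ j, j ≠ i → v j ∈ Submodule.span ℝ (Set.range u) := fun j hj =>
      Submodule.subset_span ⟨j, by simp [hu, hj]⟩
    by_cases hk : k = i
    · subst hk
      have hsum : w = ∑ j, b.repr w j • v j := by
        rw [← hb]
        exact (b.sum_repr w).symm
      have hkey : b.repr w k • v k = w - ∑ j ∈ Finset.univ.erase k, b.repr w j • v j := by
        nth_rewrite 2 [hsum]
        rw [← Finset.add_sum_erase _ _ (Finset.mem_univ k)]
        abel
      have hmem : b.repr w k • v k ∈ Submodule.span ℝ (Set.range u) := by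
        rw [hkey]
        exact Submodule.sub_mem _ hwmem (Submodule.sum_mem _ fun j hj =>
          Submodule.smul_mem _ _ (hmemj j (Finset.ne_of_mem_erase hj)))
      have : v k = (b.repr w k)⁻¹ • (b.repr w k • v k) := by
        rw [smul_smul, inv_mul_cancel₀ hi, one_smul]
      rw [this]
      exact Submodule.smul_mem _ _ hmem
    · exact hmemj k hk
  -- the linear map x ↦ (⟪u j, x⟫)_j
  set T : EuclideanSpace ℝ (Fin n) →ₗ[ℝ] (Fin n → ℝ) :=
    LinearMap.pi (fun j => (innerSL ℝ (u j)).toLinearMap) with hT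
  have hTinj : Function.Injective T := by
    rw [← LinearMap.ker_eq_bot, eq_bot_iff]
    intro x hx
    have hx' : ∀ j, ⟪u j, x⟫ = 0 := by
      intro j
      have := congrFun (LinearMap.mem_ker.mp hx) j
      simpa [hT] using this
    have hall : ∀ y ∈ Submodule.span ℝ (Set.range u), ⟪y, x⟫ = 0 := by
      intro y hy
      induction hy using Submodule.span_induction with
      | mem y hy => obtain ⟨j, rfl⟩ := hy; exact hx' j
      | zero => simp
      | add y z _ _ hy hz => rw [inner_add_left, hy, hz, add_zero]
      | smul c y _ hy => rw [inner_smul_left, hy]; simp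
    have : ⟪x, x⟫ = 0 := hall x (hspan ▸ Submodule.mem_top)
    simpa using inner_self_eq_zero.mp this
  have hdim : Module.finrank ℝ (EuclideanSpace ℝ (Fin n)) = Module.finrank ℝ (Fin n → ℝ) := by
    simp [finrank_euclideanSpace_fin]
  set e := T.linearEquivOfInjective hTinj hdim with he
  set d : Fin n → ℝ := fun j => if j = i then b₀ else a j with hd
  refine ⟨i, e.symm d, ?_⟩
  ext x
  simp only [Set.mem_setOf_eq, Set.mem_singleton_iff]
  have hTe : ∀ x, e x = T x := fun x => T.linearEquivOfInjective_apply hTinj hdim x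
  constructor
  · rintro ⟨h1, h2⟩
    rw [LinearEquiv.eq_symm_apply, hTe]
    funext j
    by_cases hj : j = i
    · subst hj; simpa [hT, hu, hd, mul_comm, real_inner_comm] using h1
    · simpa [hT, hu, hd, hj, mul_comm, real_inner_comm] using h2 j hj
  · rintro rfl
    have : T (e.symm d) = d := by rw [← hTe]; exact e.apply_symm_apply d
    constructor
    · have := congrFun this i
      simpa [hT, hu, hd, mul_comm, real_inner_comm] using this
    · intro j hj
      have := congrFun this j
      simpa [hT, hu, hd, hj, mul_comm, real_inner_comm] using this
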